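/- Let r ≥ 1 be real and let U be uniformly distributed on (0,1). Then for any real w ≠ 0 and any y > 0, y^r · P(|Uw| > y) ≤ (r/(r+1))^r · E[|Uw|^r]. -/

import Mathlib

open MeasureTheory

lemma key (r t : ℝ) (hr : 1 ≤ r) (ht0 : 0 ≤ t) (ht1 : t ≤ 1) :
    t ^ r * (1 - t) ≤ (r / (r + 1)) ^ r * (1 / (r + 1)) := by
  have hr0 : (0:ℝ) < r := lt_of_lt_of_le one_pos hr
  have hr1 : (0:ℝ) < r + 1 := by linarith
  set p₁ : ℝ := t * (r + 1) / r with hp₁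
  set p₂ : ℝ := (1 - t) * (r + 1) with hp₂
  have hp₁0 : 0 ≤ p₁ := by positivity
  have hp₂0 : 0 ≤ p₂ := by nlinarith
  have h := Real.geom_mean_le_arith_mean2_weighted
    (by positivity : (0:ℝ) ≤ r / (r+1)) (by positivity : (0:ℝ) ≤ 1 / (r+1))
    hp₁0 hp₂0 (by field_simp)
  have hsum : r / (r+1) * p₁ + 1 / (r+1) * p₂ = 1 := by
    rw [hp₁, hp₂]; field_simp; ring
  rw [hsum] at h
  have h2 : (p₁ ^ (r/(r+1)) * p₂ ^ (1/(r+1))) ^ (r+1) ≤ 1 := by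
    have := Real.rpow_le_one (by positivity) h (le_of_lt hr1)
    simpa using this
  have h3 : p₁ ^ r * p₂ ≤ 1 := by
    rw [Real.mul_rpow (by positivity) (by positivity),
        ← Real.rpow_mul hp₁0, ← Real.rpow_mul hp₂0] at h2
    have e1 : r / (r+1) * (r+1) = r := by field_simp
    have e2 : 1 / (r+1) * (r+1) = 1 := by field_simp
    rw [e1, e2, Real.rpow_one] at h2
    exact h2
  have hp1r : p₁ ^ r = t ^ r * ((r+1)/r) ^ r := by
    rw [hp₁, mul_div_assoc, Real.mul_rpow ht0 (by positivity)]
  rw [hp1r, hp₂] at h3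
  have hpos : (0:ℝ) < ((r+1)/r) ^ r := Real.rpow_pos_of_pos (by positivity) _
  have hinv : (r / (r+1)) ^ r * ((r+1)/r) ^ r = 1 := by
    rw [← Real.mul_rpow (by positivity) (by positivity)]
    rw [div_mul_div_comm]
    rw [show r * (r+1) / ((r+1) * r) = 1 by field_simp]
    simp
  have hA : (0:ℝ) < (r / (r+1)) ^ r := Real.rpow_pos_of_pos (div_pos hr0 hr1) r
  have h5 := mul_le_mul_of_nonneg_left h3 hA.le
  have h4 : t ^ r * (1 - t) * (r + 1) ≤ (r / (r + 1)) ^ r := by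
    calc t ^ r * (1 - t) * (r + 1)
        = ((r/(r+1))^r * ((r+1)/r)^r) * (t^r*(1-t)*(r+1)) := by rw [hinv]; ring
      _ = (r/(r+1))^r * (t ^ r * ((r + 1) / r) ^ r * ((1 - t) * (r + 1))) := by ring
      _ ≤ (r/(r+1))^r * 1 := h5
      _ = (r/(r+1))^r := mul_one _
  rw [mul_one_div, le_div_iff₀ hr1]
  exact h4

theorem stmt_1 {Ω : Type*} [MeasurableSpace Ω] (μ : Measure Ω) [IsProbabilityMeasure μ]
    (U : Ω → ℝ) (hU : Measurable U)
    (hUlaw : Measure.map U μ = volume.restrict (Set.Ioo (0 : ℝ) 1))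
    (r : ℝ) (hr : 1 ≤ r) (w : ℝ) (hw : w ≠ 0) (y : ℝ) (hy : 0 < y) :
    y ^ r * (μ {ω | y < |U ω * w|}).toReal ≤
      (r / (r + 1)) ^ r * ∫ ω, |U ω * w| ^ r ∂μ := by
  set c : ℝ := |w| with hcdef
  have hc : 0 < c := abs_pos.2 hw
  have hr1 : (0:ℝ) < r + 1 := by linarith
  -- measure computation
  have hs : MeasurableSet {x : ℝ | y < |x * w|} :=
    measurableSet_lt measurable_const ((measurable_id.mul_const w).abs)
  have hmeas : μ {ω | y < |U ω * w|} = ENNReal.ofReal (1 - y / c) := by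
    have h1 : μ {ω | y < |U ω * w|} = Measure.map U μ {x : ℝ | y < |x * w|} := by
      rw [Measure.map_apply hU hs]; rfl
    rw [h1, hUlaw, Measure.restrict_apply hs]
    have hseteq : {x : ℝ | y < |x * w|} ∩ Set.Ioo 0 1 = Set.Ioo (y/c) 1 := by
      ext x
      simp only [Set.mem_inter_iff, Set.mem_setOf_eq, Set.mem_Ioo, abs_mul]
      constructor
      · rintro ⟨h1, h2, h3⟩
        exact ⟨(div_lt_iff₀ hc).2 (by rwa [abs_of_pos h2] at h1), h3⟩
      · rintro ⟨h1, h2⟩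
        have hx : 0 < x := lt_trans (by positivity) h1
        exact ⟨by rw [abs_of_pos hx]; exact (div_lt_iff₀ hc).1 h1, hx, h2⟩
    rw [hseteq, Real.volume_Ioo]
  -- integral computation
  have hint : ∫ ω, |U ω * w| ^ r ∂μ = c ^ r * (1 / (r + 1)) := by
    have hsm : AEStronglyMeasurable (fun x : ℝ => |x * w| ^ r)
        (Measure.map U μ) :=
      (((measurable_id.mul_const w).abs.pow_const r)).aestronglyMeasurable
    rw [← integral_map hU.aemeasurable hsm, hUlaw]
    have hcongr : ∫ x in Set.Ioo (0:ℝ) 1, |x * w| ^ r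
        = ∫ x in Set.Ioo (0:ℝ) 1, x ^ r * c ^ r := by
      apply setIntegral_congr_fun measurableSet_Ioo
      intro x hx
      show |x * w| ^ r = x ^ r * c ^ r
      rw [abs_mul, abs_of_pos hx.1, Real.mul_rpow hx.1.le (abs_nonneg w)]
    rw [hcongr, integral_mul_const]
    have : ∫ x in Set.Ioo (0:ℝ) 1, x ^ r = 1 / (r + 1) := by
      rw [← integral_Ioc_eq_integral_Ioo, ← intervalIntegral.integral_of_le zero_le_one,
        integral_rpow (Or.inl (by linarith))]
      rw [Real.one_rpow, Real.zero_rpow (by positivity)]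
      ring
    rw [this]; ring
  rw [hmeas, hint]
  rcases le_or_gt (1 - y / c) 0 with h | h
  · rw [ENNReal.ofReal_eq_zero.2 h]
    simp only [ENNReal.toReal_zero, mul_zero]
    positivity
  · have ht0 : 0 < y / c := div_pos hy hc
    have ht1 : y / c < 1 := by linarith
    rw [ENNReal.toReal_ofReal h.le]
    have hyeq : y = (y / c) * c := by field_simp
    have hyr : y ^ r = (y / c) ^ r * c ^ r := by
      nth_rewrite 1 [hyeq]; exact Real.mul_rpow ht0.le hc.le
    have hk := key r (y / c) hr ht0.le ht1.le
    have := mul_le_mul_of_nonneg_right hk (Real.rpow_nonneg hc.le r)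
    calc y ^ r * (1 - y / c) = (y/c) ^ r * (1 - y/c) * c ^ r := by rw [hyr]; ring
      _ ≤ (r / (r + 1)) ^ r * (1 / (r + 1)) * c ^ r := this
      _ = (r / (r + 1)) ^ r * (c ^ r * (1 / (r + 1))) := by ring
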